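/- Let n be a positive integer and x_0 ∈ ℝ^n have all coordinates positive, and set α_b = (x_0)_b / (∑_{j=1}^n (x_0)_j). Then the function g̃(x) = ∏_{b=1}^n (x_b / α_b)^{α_b} is differentiable at x_0 and for every index b its partial derivative at x_0 equals 1; that is, g̃ has the same value and the same (Fréchet) derivative at x_0 as the function g(x) = ∑_{b=1}^n x_b. -/

import Mathlib

/-- First-order tightness in Lemma 3 (specialized to `u b x = x b`): with weights
`α b = (x0 b) / ∑ j, x0 j`, the monomial `g̃ x = ∏ b, (x b / α b) ^ (α b)` is
differentiable at `x0`, has the same value there as `g x = ∑ b, x b`, and has the same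
Fréchet derivative, namely the linear functional `v ↦ ∑ b, v b` (all partial
derivatives equal to `1`). -/
theorem monomial_best_first_order_approx (n : ℕ) (hn : 0 < n) (x0 : Fin n → ℝ)
    (hx0 : ∀ b, 0 < x0 b) (α : Fin n → ℝ) (hα : ∀ b, α b = x0 b / ∑ j, x0 j) :
    (∏ b, (x0 b / α b) ^ (α b) = ∑ b, x0 b) ∧
    HasFDerivAt (fun x : Fin n → ℝ => ∏ b, (x b / α b) ^ (α b))
      ((∑ b, ContinuousLinearMap.proj b : (Fin n → ℝ) →L[ℝ] ℝ)) x0 ∧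
    HasFDerivAt (fun x : Fin n → ℝ => ∑ b, x b)
      ((∑ b, ContinuousLinearMap.proj b : (Fin n → ℝ) →L[ℝ] ℝ)) x0 := by
  set S : ℝ := ∑ j, x0 j with hSdef
  have hS : 0 < S := Finset.sum_pos (fun j _ => hx0 j) ⟨⟨0, hn⟩, Finset.mem_univ _⟩
  have hαpos : ∀ b, 0 < α b := fun b => by
    rw [hα b]; exact div_pos (hx0 b) hS
  have hratio : ∀ b, x0 b / α b = S := fun b => by
    rw [hα b]; field_simp [(hx0 b).ne']
  have hαsum : ∑ b, α b = 1 := by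
    have : ∑ b, α b = (∑ b, x0 b) / S := by
      rw [Finset.sum_div]; exact Finset.sum_congr rfl fun b _ => hα b
    rw [this, ← hSdef, div_self hS.ne']
  have hval : ∏ b, (x0 b / α b) ^ (α b) = ∑ b, x0 b := by
    have : ∏ b, (x0 b / α b) ^ (α b) = ∏ b, S ^ (α b) := by
      exact Finset.prod_congr rfl fun b _ => by rw [hratio b]
    rw [this, ← Real.rpow_sum_of_pos hS, hαsum, Real.rpow_one]
  refine ⟨hval, ?_, ?_⟩
  · -- derivative of the monomial
    have hfac : ∀ b : Fin n, HasFDerivAt (fun x : Fin n → ℝ => (x b / α b) ^ (α b))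
        ((α b * (x0 b / α b) ^ (α b - 1) * (α b)⁻¹) • (ContinuousLinearMap.proj b : (Fin n → ℝ) →L[ℝ] ℝ)) x0 := by
      intro b
      have h1 : HasFDerivAt (fun x : Fin n → ℝ => x b / α b)
          ((α b)⁻¹ • (ContinuousLinearMap.proj b : (Fin n → ℝ) →L[ℝ] ℝ)) x0 := by
        have h0 := (((α b)⁻¹ • (ContinuousLinearMap.proj b : (Fin n → ℝ) →L[ℝ] ℝ))).hasFDerivAt (x := x0)
        have heq : ⇑((α b)⁻¹ • (ContinuousLinearMap.proj b : (Fin n → ℝ) →L[ℝ] ℝ))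
            = fun x : Fin n → ℝ => x b / α b := by
          ext x; simp [div_eq_mul_inv, mul_comm]
        rwa [heq] at h0
      have h2 := h1.rpow_const (p := α b)
        (Or.inl (div_pos (hx0 b) (hαpos b)).ne')
      simpa [smul_smul, mul_assoc] using h2
    have hprod := HasFDerivAt.finset_prod (u := Finset.univ) (fun b _ => hfac b)
    convert hprod using 1
    iterate 5 rfl
    refine (Finset.sum_congr rfl fun b _ => ?_).symm
    have hv : ∀ j, (x0 j / α j) ^ (α j) = S ^ (α j) := fun j => by rw [hratio j]
    have hprodval : ∏ j ∈ Finset.univ.erase b, (x0 j / α j) ^ (α j)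
        = S ^ (1 - α b) := by
      have : ∏ j ∈ Finset.univ.erase b, (x0 j / α j) ^ (α j)
          = ∏ j ∈ Finset.univ.erase b, S ^ (α j) :=
        Finset.prod_congr rfl fun j _ => hv j
      rw [this, ← Real.rpow_sum_of_pos hS]
      congr 1
      have := Finset.add_sum_erase Finset.univ α (Finset.mem_univ b)
      rw [hαsum] at this
      linarith
    rw [hprodval, hratio b, smul_smul]
    have hcoef : S ^ (1 - α b) * (α b * S ^ (α b - 1) * (α b)⁻¹) = 1 := by
      have hα0 := (hαpos b).ne'
      rw [mul_comm (α b) _, mul_assoc, mul_inv_cancel₀ hα0, mul_one,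
        ← Real.rpow_add hS]
      norm_num
    rw [hcoef, one_smul]
  · -- derivative of the sum
    have : ∀ b : Fin n, HasFDerivAt (fun x : Fin n → ℝ => x b)
        (ContinuousLinearMap.proj b : (Fin n → ℝ) →L[ℝ] ℝ) x0 :=
      fun b => (ContinuousLinearMap.proj b : (Fin n → ℝ) →L[ℝ] ℝ).hasFDerivAt
    exact HasFDerivAt.fun_sum fun b _ => this b
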